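/- arXiv:2501.16170 — 2 statements merged into one kernel-verified Lean document; each statement's English description precedes it below -/
import Mathlib

section
/- Let r ∈ ℕ and let G be a connected graph whose binary cycle space is generated by cycles of length ≤ r. Let {A₁,A₂} and {C₁,C₂} be separations of G with r-tomic separators X and Y, respectively, such that X and Y are r-coupled, and let {E₁,X,E₂} and {F₁,Y,F₂} be the r-local separations induced by {A₁,A₂} and {C₁,C₂}. Then: (i) the X-link for C_i equals the X-link for F_i, for both i = 1,2; (ii) the Y-link for A_i equals the Y-link for E_i, for both i = 1,2; (iii) E_G(X∩Y, (A_i∖A_{3−i})∩(C_j∖C_{3−j})) = E_i∩F_j∩∂(X∩Y) for all i,j ∈ {1,2}. -/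
namespace LS

open SimpleGraph

variable {V : Type*}

/-- `(A, B)` is an (oriented) separation of `G`: the two sides cover `V`
and there is no edge between `A ∖ B` and `B ∖ A`. -/
def IsSep (G : SimpleGraph V) (A B : Set V) : Prop :=
  A ∪ B = Set.univ ∧ ∀ a ∈ A \ B, ∀ b ∈ B \ A, ¬G.Adj a b

/-- `(A,B) ≥ (C,D)` for oriented separations, i.e. `A ⊆ C` and `B ⊇ D`. -/
def SepGE (s t : Set V × Set V) : Prop := s.1 ⊆ t.1 ∧ t.2 ⊆ s.2

/-- Two (unoriented) separations are nested if they have `≥`-comparable orientations. -/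
def Nested (s t : Set V × Set V) : Prop :=
  SepGE s t ∨ SepGE s (t.2, t.1) ∨ SepGE (s.2, s.1) t ∨ SepGE (s.2, s.1) (t.2, t.1)

/-- Two separations cross if they are not nested. -/
def Crosses (s t : Set V × Set V) : Prop := ¬Nested s t

/-- The neighbourhood `N_G(K)` of a vertex set `K`. -/
def nbhdSet (G : SimpleGraph V) (K : Set V) : Set V :=
  {v | v ∉ K ∧ ∃ u ∈ K, G.Adj u v}

/-- `K` is (the vertex set of) a connected component of the subgraph of `G` induced on `S`. -/
def IsCompOf (G : SimpleGraph V) (K S : Set V) : Prop :=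
  K.Nonempty ∧ K ⊆ S ∧ (G.induce K).Connected ∧ ∀ a ∈ K, ∀ b ∈ S, G.Adj a b → b ∈ K

/-- `K` is a component of `G − X` that is tight at `X`, i.e. `N_G(K) = X`. -/
def TightCompAt (G : SimpleGraph V) (K X : Set V) : Prop :=
  IsCompOf G K Xᶜ ∧ nbhdSet G K = X

/-- A separation `{A,B}` is tight if `G − (A ∩ B)` has tight components
contained in `A` and in `B`, respectively. -/
def TightSep (G : SimpleGraph V) (A B : Set V) : Prop :=
  (∃ K, TightCompAt G K (A ∩ B) ∧ K ⊆ A) ∧ ∃ K, TightCompAt G K (A ∩ B) ∧ K ⊆ B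

/-- `X` is a tight separator: `G − X` has at least two components tight at `X`. -/
def TightSeparator (G : SimpleGraph V) (X : Set V) : Prop :=
  ∃ K₁ K₂, K₁ ≠ K₂ ∧ TightCompAt G K₁ X ∧ TightCompAt G K₂ X

/-- The set `E_G(S,T)` of edges of `G` with one end in `S` and the other in `T`. -/
def edgesBetween (G : SimpleGraph V) (S T : Set V) : Set (Sym2 V) :=
  {e | ∃ u v, G.Adj u v ∧ e = s(u, v) ∧ u ∈ S ∧ v ∈ T}

/-- `∂X`: the set of edges of `G` with exactly one end in `X`. -/
def edgeBdry (G : SimpleGraph V) (X : Set V) : Set (Sym2 V) :=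
  {e | ∃ u v, G.Adj u v ∧ e = s(u, v) ∧ u ∈ X ∧ v ∉ X}

/-- The separator of an oriented separation. -/
def tsSep (s : Set V × Set V) : Set V := s.1 ∩ s.2

/-- `p` lists the three distinct oriented separations of a ⊤-star. -/
def IsTStar (G : SimpleGraph V) (p : Fin 3 → Set V × Set V) : Prop :=
  Function.Injective p ∧ (∀ i, IsSep G (p i).1 (p i).2) ∧
  (∀ i j, i ≠ j → Disjoint ((p i).1 \ (p i).2) ((p j).1 \ (p j).2)) ∧
  (⋃ i, ((p i).1 \ (p i).2)) = (⋃ i, tsSep (p i))ᶜ ∧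
  ∀ i, ∀ v ∈ tsSep (p i), ∃ j, j ≠ i ∧ v ∈ tsSep (p j)

/-- The centre `Z` of a ⊤-star. -/
def tsCentre (p : Fin 3 → Set V × Set V) : Set V := ⋂ i, tsSep (p i)

/-- The `ij`-link `X_{ij}` of a ⊤-star. -/
def tsLink (p : Fin 3 → Set V × Set V) (i j : Fin 3) : Set V :=
  (tsSep (p i) ∩ tsSep (p j)) \ tsCentre p

/-- The ⊤-star `p` is relevant with base `p 0`. -/
def RelevantTStar (G : SimpleGraph V) (p : Fin 3 → Set V × Set V) : Prop :=
  IsTStar G p ∧ TightSep G (p 0).1 (p 0).2 ∧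
  ∀ x ∈ tsLink p 1 2, ∀ i : Fin 3, i ≠ 0 →
    (∃ y ∈ tsLink p 0 i, G.Adj x y) ∨
    ∃ y ∈ tsLink p 0 i ∪ tsCentre p, ∃ K, IsCompOf G K ((p i).1 \ (p i).2) ∧
      x ∈ nbhdSet G K ∧ y ∈ nbhdSet G K

/-- A bottleneck of order `k` in `G`, encoded as a set of oriented separations
closed under reversal (representing a set of unoriented separations). -/
def IsBottleneck (G : SimpleGraph V) (k : ℕ) (β : Set (Set V × Set V)) : Prop :=
  β.Nonempty ∧ (∀ s ∈ β, (s.2, s.1) ∈ β) ∧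
  (∀ s ∈ β, IsSep G s.1 s.2 ∧ TightSep G s.1 s.2 ∧ (s.1 ∩ s.2).encard = k) ∧
  ∀ p : Fin 3 → Set V × Set V, RelevantTStar G p →
    (∀ i, (tsSep (p i)).encard ≤ (k : ℕ∞)) → p 0 ∈ β → p 1 ∈ β ∨ p 2 ∈ β

/-! ### Tangles -/

/-- A tangle of order `ℓ` in `G`. -/
def IsTangle (G : SimpleGraph V) (ℓ : ℕ) (τ : Set (Set V × Set V)) : Prop :=
  (∀ s ∈ τ, IsSep G s.1 s.2 ∧ (s.1 ∩ s.2).encard < (ℓ : ℕ∞)) ∧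
  (∀ A B : Set V, IsSep G A B → (A ∩ B).encard < (ℓ : ℕ∞) → ((A, B) ∈ τ ∨ (B, A) ∈ τ)) ∧
  (∀ A B : Set V, (A, B) ∈ τ → (B, A) ∈ τ → A = B) ∧
  ∀ s₁ ∈ τ, ∀ s₂ ∈ τ, ∀ s₃ ∈ τ,
    ¬(s₁.1 ∪ s₂.1 ∪ s₃.1 = Set.univ ∧
      ∀ u v : V, G.Adj u v →
        (u ∈ s₁.1 ∧ v ∈ s₁.1) ∨ (u ∈ s₂.1 ∧ v ∈ s₂.1) ∨ (u ∈ s₃.1 ∧ v ∈ s₃.1))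

/-- The separation `{A,B}` distinguishes the tangles `τ` and `τ'`. -/
def DistinguishesT (τ τ' : Set (Set V × Set V)) (A B : Set V) : Prop :=
  ((A, B) ∈ τ ∧ (B, A) ∈ τ') ∨ ((B, A) ∈ τ ∧ (A, B) ∈ τ')

/-- The separation `{A,B}` distinguishes the vertex sets `Y` and `Z`. -/
def DistSets (Y Z A B : Set V) : Prop :=
  (Y ⊆ A ∧ (Y ∩ (A \ B)).Nonempty ∧ Z ⊆ B ∧ (Z ∩ (B \ A)).Nonempty) ∨
  (Y ⊆ B ∧ (Y ∩ (B \ A)).Nonempty ∧ Z ⊆ A ∧ (Z ∩ (A \ B)).Nonempty)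

/-! ### The construction of the nested sets `N^k(G)` -/

/-- `X^k`: the union of all `k`-bottlenecks in `G`. -/
def Xk (G : SimpleGraph V) (k : ℕ) : Set (Set V × Set V) :=
  {s | ∃ β, IsBottleneck G k β ∧ s ∈ β}

/-- `x^k(s)`: the number of separations in `X^k` that `s` crosses. -/
noncomputable def xk (G : SimpleGraph V) (k : ℕ) (s : Set V × Set V) : ℕ :=
  {t ∈ Xk G k | Crosses s t}.ncard

/-- `N^k(G,β)` relative to a previously constructed set `M` of separations:
the elements of `β` nested with `M` that minimise `x^k` among those. -/
def NkOfBeta (G : SimpleGraph V) (M : Set (Set V × Set V)) (k : ℕ)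
    (β : Set (Set V × Set V)) : Set (Set V × Set V) :=
  {s ∈ β | (∀ t ∈ M, Nested s t) ∧
    ∀ s' ∈ β, (∀ t ∈ M, Nested s' t) → xk G k s ≤ xk G k s'}

/-- `N^k(G)` relative to a previously constructed set `M`. -/
def NkStep (G : SimpleGraph V) (M : Set (Set V × Set V)) (k : ℕ) :
    Set (Set V × Set V) :=
  {s | ∃ β, IsBottleneck G k β ∧ s ∈ NkOfBeta G M k β}

/-- `N^{<k}(G) = ⋃_{j<k} N^j(G)`. -/
noncomputable def Nlt (G : SimpleGraph V) : ℕ → Set (Set V × Set V)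
  | 0 => ∅
  | k + 1 => Nlt G k ∪ NkStep G (Nlt G k) k

/-- `N^k(G)`. -/
noncomputable def Nk (G : SimpleGraph V) (k : ℕ) : Set (Set V × Set V) :=
  NkStep G (Nlt G k) k

/-- `N(G) = ⋃_k N^k(G)`. -/
noncomputable def NSet (G : SimpleGraph V) : Set (Set V × Set V) :=
  ⋃ k, Nk G k

/-! ### Walks, local components and local separations -/

/-- An `X`-walk: a walk having precisely its first and last vertex in `X`. -/
def IsXWalk (G : SimpleGraph V) (X : Set V) {u v : V} (W : G.Walk u v) : Prop :=
  u ∈ X ∧ v ∈ X ∧ ∀ w ∈ W.support, w ∈ X → w = u ∨ w = v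

/-- An `r`-local `X`-walk: an `X`-walk contained in a cycle of length `≤ r`,
or an `X`-walk consisting of a single `X`-edge. -/
def IsLocalXWalk (G : SimpleGraph V) (r : ℕ) (X : Set V) {u v : V} (W : G.Walk u v) :
    Prop :=
  IsXWalk G X W ∧
  ((∃ (a : V) (C : G.Walk a a), C.IsCycle ∧ C.length ≤ r ∧ ∀ e ∈ W.edges, e ∈ C.edges) ∨
    W.length = 1)

/-- An `r`-local `X`-path. -/
def IsLocalXPath (G : SimpleGraph V) (r : ℕ) (X : Set V) {u v : V} (W : G.Walk u v) :
    Prop :=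
  IsLocalXWalk G r X W ∧ W.IsPath

/-- Walks that are concatenations of `r`-local `X`-paths. -/
inductive ConcatLocalPaths (G : SimpleGraph V) (r : ℕ) (X : Set V) :
    ∀ {u v : V}, G.Walk u v → Prop
  | single {u v : V} (W : G.Walk u v) (h : IsLocalXPath G r X W) :
      ConcatLocalPaths G r X W
  | comp {u v w : V} (W₁ : G.Walk u v) (W₂ : G.Walk v w)
      (h₁ : IsLocalXPath G r X W₁) (h₂ : ConcatLocalPaths G r X W₂) :
      ConcatLocalPaths G r X (W₁.append W₂)

/-- `W ∈ W_r(X)`: `W` is a concatenation of `r`-local `X`-paths repeating no vertex of `X`. -/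
def MemWr (G : SimpleGraph V) (r : ℕ) (X : Set V) {u v : V} (W : G.Walk u v) : Prop :=
  ConcatLocalPaths G r X W ∧ ∀ x ∈ X, ¬W.support.Duplicate x

/-- `X` is `r`-tomic: any two of its vertices are joined by a walk in `W_r(X)`. -/
def Rtomic (G : SimpleGraph V) (r : ℕ) (X : Set V) : Prop :=
  ∀ x ∈ X, ∀ y ∈ X, x ≠ y → ∃ W : G.Walk x y, MemWr G r X W

/-- One step of the relation generating the `r`-local components at `X`:
`e = f`, or `e` and `f` are the first and last edges of an `r`-local `X`-walk
(both required to lie in `∂X`). -/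
def LocalEdgeStep (G : SimpleGraph V) (r : ℕ) (X : Set V) (e f : Sym2 V) : Prop :=
  e ∈ edgeBdry G X ∧ f ∈ edgeBdry G X ∧
  (e = f ∨ ∃ (u v : V) (W : G.Walk u v), IsLocalXWalk G r X W ∧
      W.edges.head? = some e ∧ W.edges.getLast? = some f)

/-- `F` is an `r`-local component at `X`: an equivalence class of the transitive
closure of `LocalEdgeStep` on `∂X`. -/
def LocalCompAt (G : SimpleGraph V) (r : ℕ) (X : Set V) (F : Set (Sym2 V)) : Prop :=
  ∃ e ∈ edgeBdry G X, F = {f | Relation.ReflTransGen (LocalEdgeStep G r X) e f}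

/-- An edge set `F` is tight with respect to `X` if every vertex of `X`
is incident with an edge of `F`. -/
def TightLocalComp (X : Set V) (F : Set (Sym2 V)) : Prop :=
  ∀ x ∈ X, ∃ e ∈ F, x ∈ e

/-- `X` is a tight `r`-local separator: at least two tight `r`-local components at `X`. -/
def TightLocalSeparator (G : SimpleGraph V) (r : ℕ) (X : Set V) : Prop :=
  ∃ F₁ F₂, F₁ ≠ F₂ ∧ LocalCompAt G r X F₁ ∧ LocalCompAt G r X F₂ ∧
    TightLocalComp X F₁ ∧ TightLocalComp X F₂

/-- `(E₁, X, E₂)` is an (oriented) `r`-local separation of `G`. -/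
def IsLocalSep (G : SimpleGraph V) (r : ℕ) (E₁ : Set (Sym2 V)) (X : Set V)
    (E₂ : Set (Sym2 V)) : Prop :=
  Disjoint E₁ E₂ ∧ E₁ ∪ E₂ = edgeBdry G X ∧
    ∀ F, LocalCompAt G r X F → F ⊆ E₁ ∨ F ⊆ E₂

/-- A tight `r`-local separation: each side includes a tight `r`-local component at `X`. -/
def TightLocalSep (G : SimpleGraph V) (r : ℕ) (E₁ : Set (Sym2 V)) (X : Set V)
    (E₂ : Set (Sym2 V)) : Prop :=
  IsLocalSep G r E₁ X E₂ ∧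
  (∃ F, LocalCompAt G r X F ∧ TightLocalComp X F ∧ F ⊆ E₁) ∧
  ∃ F, LocalCompAt G r X F ∧ TightLocalComp X F ∧ F ⊆ E₂

/-- The oriented `r`-local separation `s_r` induced by the oriented separation
`s = (A₁, A₂)`: its separator is `X = A₁ ∩ A₂`, and its sides are
`E_i = E_G(A_i ∖ X, X)`. -/
def inducedLocal (G : SimpleGraph V) (s : Set V × Set V) :
    Set (Sym2 V) × Set V × Set (Sym2 V) :=
  (edgesBetween G (s.1 \ (s.1 ∩ s.2)) (s.1 ∩ s.2), s.1 ∩ s.2,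
    edgesBetween G (s.2 \ (s.1 ∩ s.2)) (s.1 ∩ s.2))

/-- Some cycle of `G` of length `≤ r` alternates between the disjoint sets `X` and `Y`:
it visits four distinct vertices `x, y, x', y'` in this cyclic order with
`x, x' ∈ X` and `y, y' ∈ Y`. -/
def Alternates (G : SimpleGraph V) (r : ℕ) (X Y : Set V) : Prop :=
  ∃ (a : V) (C : G.Walk a a), C.IsCycle ∧ C.length ≤ r ∧
    ∃ (x y x' y' : V) (l₁ l₂ l₃ l₄ l₅ : List V),
      x ∈ X ∧ x' ∈ X ∧ y ∈ Y ∧ y' ∈ Y ∧ x ≠ x' ∧ y ≠ y' ∧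
      C.support = l₁ ++ x :: l₂ ++ y :: l₃ ++ x' :: l₄ ++ y' :: l₅

/-- `X` and `Y` are `r`-coupled. -/
def RCoupled (G : SimpleGraph V) (r : ℕ) (X Y : Set V) : Prop :=
  (X ∩ Y).Nonempty ∨ (Disjoint X Y ∧ Alternates G r X Y)

/-- The `X`-link for the side `Fi` of an `r`-local separation with separator `Y`:
vertices `x ∈ X ∖ Y` from which some walk in `W_r(X)` visits `Y` with its first
edge in `∂Y` lying in `Fi`. -/
def LocalLink (G : SimpleGraph V) (r : ℕ) (X Y : Set V) (Fi : Set (Sym2 V)) : Set V :=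
  {x | x ∈ X \ Y ∧ ∃ (z : V) (W : G.Walk x z), MemWr G r X W ∧
      (∃ y ∈ Y, y ∈ W.support) ∧
      ∃ (e : Sym2 V) (l₁ l₂ : List (Sym2 V)), W.edges = l₁ ++ e :: l₂ ∧
        e ∈ edgeBdry G Y ∧ e ∈ Fi ∧ ∀ e' ∈ l₁, e' ∉ edgeBdry G Y}

/-- The `r`-local separations `{E₁,X,E₂}` and `{F₁,Y,F₂}` cross. -/
def LocalCrosses (G : SimpleGraph V) (r : ℕ) (E₁ : Set (Sym2 V)) (X : Set V)
    (E₂ : Set (Sym2 V)) (F₁ : Set (Sym2 V)) (Y : Set V) (F₂ : Set (Sym2 V)) : Prop :=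
  RCoupled G r X Y ∧ ∀ i j : Bool,
    (LocalLink G r X Y (cond j F₁ F₂)).Nonempty ∨
    (LocalLink G r Y X (cond i E₁ E₂)).Nonempty ∨
    ((cond i E₁ E₂) ∩ (cond j F₁ F₂) ∩ edgeBdry G (X ∩ Y)).Nonempty

/-- The edge set of a walk, as a set. -/
def walkEdgeSet {G : SimpleGraph V} {a b : V} (W : G.Walk a b) : Set (Sym2 V) :=
  {e | e ∈ W.edges}

/-- The binary cycle space of `G` is generated by the cycles of length `≤ r`:
the edge set of every cycle is a symmetric difference of edge sets of cycles
of length `≤ r`. -/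
def CycleSpaceGenShort (G : SimpleGraph V) (r : ℕ) : Prop :=
  ∀ ⦃a : V⦄ (C : G.Walk a a), C.IsCycle →
    ∃ L : List ((b : V) × G.Walk b b),
      (∀ p ∈ L, p.2.IsCycle ∧ p.2.length ≤ r) ∧
      walkEdgeSet C = L.foldr (fun p E => symmDiff (walkEdgeSet p.2) E) ∅

/-! ### Local ⊤-stars and local bottlenecks -/

/-- `q` lists the three oriented `r`-local separations of an `r`-local ⊤-star. -/
def IsLocalTStar (G : SimpleGraph V) (r : ℕ)
    (q : Fin 3 → Set (Sym2 V) × Set V × Set (Sym2 V)) : Prop :=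
  Function.Injective q ∧
  (∀ i, IsLocalSep G r (q i).1 (q i).2.1 (q i).2.2) ∧
  (∀ i j, i ≠ j → Disjoint (q i).1 (q j).1) ∧
  (⋃ i, (q i).1) = edgeBdry G (⋃ i, (q i).2.1) ∧
  (∀ i, ∀ v ∈ (q i).2.1, ∃ j, j ≠ i ∧ v ∈ (q j).2.1) ∧
  ∀ F, LocalCompAt G r (⋃ i, (q i).2.1) F → ∃ i, F ⊆ (q i).1

/-- The `r`-local ⊤-star `q` is relevant with base `q 0`. -/
def RelevantLocalTStar (G : SimpleGraph V) (r : ℕ)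
    (q : Fin 3 → Set (Sym2 V) × Set V × Set (Sym2 V)) : Prop :=
  IsLocalTStar G r q ∧ TightLocalSep G r (q 0).1 (q 0).2.1 (q 0).2.2 ∧
  ∀ x ∈ ((q 1).2.1 ∩ (q 2).2.1) \ ⋂ j, (q j).2.1, ∀ i : Fin 3, i ≠ 0 →
    (∃ y ∈ ((q 0).2.1 ∩ (q i).2.1) \ ⋂ j, (q j).2.1, G.Adj x y) ∨
    ∃ F, LocalCompAt G r (⋃ j, (q j).2.1) F ∧ F ⊆ (q i).1 ∧
      (∃ e ∈ F, x ∈ e) ∧ ∃ e ∈ F, ∃ y ∈ (q 0).2.1 ∩ (q i).2.1, y ∈ e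

/-- An `r`-local bottleneck of order `k` in `G`, encoded as a set of oriented
`r`-local separations closed under reversal. -/
def IsLocalBottleneck (G : SimpleGraph V) (r k : ℕ)
    (β : Set (Set (Sym2 V) × Set V × Set (Sym2 V))) : Prop :=
  β.Nonempty ∧ (∀ q ∈ β, (q.2.2, q.2.1, q.1) ∈ β) ∧
  (∀ q ∈ β, TightLocalSep G r q.1 q.2.1 q.2.2 ∧ q.2.1.encard = (k : ℕ∞)) ∧
  ∀ p : Fin 3 → Set (Sym2 V) × Set V × Set (Sym2 V), RelevantLocalTStar G r p →
    (∀ i, ((p i).2.1).encard ≤ (k : ℕ∞)) → p 0 ∈ β → p 1 ∈ β ∨ p 2 ∈ β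

/-! ### Auxiliary lemmas for Statement 15 -/

section Statement15Aux

variable {G : SimpleGraph V} {r : ℕ}

private lemma exists_first_decomp {α : Type*} (P : α → Prop) :
    ∀ (L : List α), (∃ e ∈ L, P e) →
      ∃ l₁ e l₂, L = l₁ ++ e :: l₂ ∧ P e ∧ ∀ e' ∈ l₁, ¬P e'
  | [], h => by simp at h
  | a :: L, h => by
    by_cases ha : P a
    · exact ⟨[], a, L, rfl, ha, by simp⟩
    · obtain ⟨e, he, hPe⟩ := h
      rcases List.mem_cons.1 he with rfl | he
      · exact absurd hPe ha
      · obtain ⟨l₁, e', l₂, rfl, hPe', hl₁⟩ := exists_first_decomp P L ⟨e, he, hPe⟩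
        refine ⟨a :: l₁, e', l₂, rfl, hPe', ?_⟩
        intro e'' he''
        rcases List.mem_cons.1 he'' with rfl | he''
        · exact ha
        · exact hl₁ e'' he''

private lemma walk_support_getLast? {u v : V} (p : G.Walk u v) :
    p.support.getLast? = some v := by
  induction p with
  | nil => rfl
  | cons h p ih =>
    cases hs : p.support with
    | nil => exact absurd hs p.support_ne_nil
    | cons b t =>
      rw [Walk.support_cons, hs, List.getLast?_cons_cons, ← hs, ih]

private lemma mem_of_getLast? {l : List V} {a : V} (h : l.getLast? = some a) : a ∈ l := by
  obtain ⟨hne, rfl⟩ := List.mem_getLast?_eq_getLast (l := l) (x := a) h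
  exact List.getLast_mem hne

private lemma mem_edgeBdry_mk {Y : Set V} {a b : V} (hab : G.Adj a b) (ha : a ∈ Y)
    (hb : b ∉ Y) : s(a, b) ∈ edgeBdry G Y := ⟨a, b, hab, rfl, ha, hb⟩

private lemma mem_edgeBdry_mk' {Y : Set V} {a b : V} (hab : G.Adj a b) (ha : a ∈ Y)
    (hb : b ∉ Y) : s(b, a) ∈ edgeBdry G Y := by
  rw [Sym2.eq_swap]; exact mem_edgeBdry_mk hab ha hb

private lemma edgeBdry_other {Y : Set V} {u w : V} (h : s(u, w) ∈ edgeBdry G Y)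
    (hu : u ∉ Y) : w ∈ Y := by
  obtain ⟨a, b, hab, he, ha, hb⟩ := h
  rw [Sym2.eq_iff] at he
  rcases he with ⟨rfl, rfl⟩ | ⟨rfl, rfl⟩
  · exact absurd ha hu
  · exact ha

private lemma side_stable {C D : Set V} (h₂ : IsSep G C D) {x b : V}
    (hx : x ∉ C ∩ D) (hb : b ∉ C ∩ D) (hadj : G.Adj x b) : x ∈ C ↔ b ∈ C := by
  have hunion : ∀ v : V, v ∈ C ∪ D := fun v => h₂.1 ▸ Set.mem_univ v
  constructor
  · intro hxC
    by_contra hbC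
    have hbD : b ∈ D := (hunion b).resolve_left hbC
    exact h₂.2 x ⟨hxC, fun hxD => hx ⟨hxC, hxD⟩⟩ b ⟨hbD, hbC⟩ hadj
  · intro hbC
    by_contra hxC
    have hxD : x ∈ D := (hunion x).resolve_left hxC
    exact h₂.2 b ⟨hbC, fun hbD => hb ⟨hbC, hbD⟩⟩ x ⟨hxD, hxC⟩ hadj.symm

private lemma first_bdry_side {C D : Set V} (h₂ : IsSep G C D) :
    ∀ {x z : V} (W : G.Walk x z) (l₁ : List (Sym2 V)) (e : Sym2 V) (l₂ : List (Sym2 V)),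
      W.edges = l₁ ++ e :: l₂ → (∀ e' ∈ l₁, e' ∉ edgeBdry G (C ∩ D)) → x ∉ C ∩ D →
      ∃ u w, G.Adj u w ∧ e = s(u, w) ∧ u ∉ C ∩ D ∧ (u ∈ C ↔ x ∈ C) := by
  intro x z W
  induction W with
  | nil => intro l₁ e l₂ hdec _ _; simp at hdec
  | @cons x b z hadj W ih =>
    intro l₁ e l₂ hdec hl₁ hx
    rw [Walk.edges_cons] at hdec
    cases l₁ with
    | nil =>
      rw [List.nil_append] at hdec
      obtain ⟨he, -⟩ := List.cons_eq_cons.mp hdec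
      exact ⟨x, b, hadj, he.symm, hx, Iff.rfl⟩
    | cons e₀ l₁' =>
      rw [List.cons_append] at hdec
      obtain ⟨he₀, hdec'⟩ := List.cons_eq_cons.mp hdec
      have hb : b ∉ C ∩ D := by
        intro hb
        exact hl₁ e₀ List.mem_cons_self (he₀ ▸ mem_edgeBdry_mk' hadj.symm hb hx)
      obtain ⟨u, w, hadj', he, hu, hiff⟩ :=
        ih l₁' e l₂ hdec' (fun e' he' => hl₁ e' (List.mem_cons_of_mem _ he')) hb
      exact ⟨u, w, hadj', he, hu, hiff.trans (side_stable h₂ hx hb hadj).symm⟩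

private lemma exists_bdry_edge {Y : Set V} :
    ∀ {x z : V} (W : G.Walk x z), x ∉ Y → (∃ y ∈ Y, y ∈ W.support) →
      ∃ e ∈ W.edges, e ∈ edgeBdry G Y := by
  intro x z W
  induction W with
  | nil =>
    rintro hx ⟨y, hyY, hy⟩
    rw [Walk.support_nil, List.mem_singleton] at hy
    exact absurd (hy ▸ hyY) hx
  | @cons x b z hadj W ih =>
    rintro hx ⟨y, hyY, hy⟩
    by_cases hb : b ∈ Y
    · exact ⟨s(x, b), by simp, mem_edgeBdry_mk' hadj.symm hb hx⟩
    · rw [Walk.support_cons, List.mem_cons] at hy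
      rcases hy with rfl | hy
      · exact absurd hyY hx
      · obtain ⟨e, he, heb⟩ := ih hb ⟨y, hyY, hy⟩
        exact ⟨e, by simp [he], heb⟩

private lemma IsSep.symm' {C D : Set V} (h : IsSep G C D) : IsSep G D C :=
  ⟨by rw [Set.union_comm]; exact h.1, fun a ha b hb hadj => h.2 b hb a ha hadj.symm⟩

private lemma edges_eq (G : SimpleGraph V) (A B C D : Set V) :
    edgesBetween G ((A ∩ B) ∩ (C ∩ D)) ((A \ B) ∩ (C \ D)) =
      edgesBetween G (A \ (A ∩ B)) (A ∩ B) ∩ edgesBetween G (C \ (C ∩ D)) (C ∩ D) ∩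
        edgeBdry G ((A ∩ B) ∩ (C ∩ D)) := by
  ext e
  constructor
  · rintro ⟨u, v, hadj, rfl, hu, hv⟩
    refine ⟨⟨⟨v, u, hadj.symm, Sym2.eq_swap, ⟨hv.1.1, fun hc => hv.1.2 hc.2⟩, hu.1⟩,
      ⟨v, u, hadj.symm, Sym2.eq_swap, ⟨hv.2.1, fun hc => hv.2.2 hc.2⟩, hu.2⟩⟩,
      ⟨u, v, hadj, rfl, hu, fun hc => hv.1.2 hc.1.2⟩⟩
  · rintro ⟨⟨⟨u₁, v₁, h1, he1, hu₁, hv₁⟩, ⟨u₂, v₂, h2, he2, hu₂, hv₂⟩⟩,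
      ⟨u₃, v₃, h3, he3, hu₃, hv₃⟩⟩
    subst he3
    rw [Sym2.eq_iff] at he1 he2
    rcases he1 with ⟨rfl, rfl⟩ | ⟨rfl, rfl⟩
    · exact absurd hu₃.1 hu₁.2
    · rcases he2 with ⟨rfl, rfl⟩ | ⟨rfl, rfl⟩
      · exact absurd hu₃.2 hu₂.2
      · exact ⟨u₃, v₃, h3, rfl, hu₃,
          ⟨⟨hu₁.1, fun hb => hu₁.2 ⟨hu₁.1, hb⟩⟩, ⟨hu₂.1, fun hd => hu₂.2 ⟨hu₂.1, hd⟩⟩⟩⟩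

private lemma concat_append_right {X : Set V} :
    ∀ {u v : V} {W : G.Walk u v}, ConcatLocalPaths G r X W →
      ∀ {w : V} (P : G.Walk v w), IsLocalXPath G r X P →
        ConcatLocalPaths G r X (W.append P) := by
  intro u v W hW
  induction hW with
  | single W h => intro w P hP; exact .comp W P h (.single P hP)
  | comp W₁ W₂ h₁ h₂ ih =>
    intro w P hP
    rw [← Walk.append_assoc]
    exact .comp W₁ _ h₁ (ih P hP)

private lemma prefix_to {X : Set V} :
    ∀ {u v : V} {W : G.Walk u v}, ConcatLocalPaths G r X W →
      ∀ q, q ∈ X → q ∈ W.support → q ≠ u →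
      ∃ (P : G.Walk u q) (s : List V), ConcatLocalPaths G r X P ∧
        W.support = P.support ++ s := by
  intro u v W hW
  induction hW with
  | single W h =>
    intro q hqX hqs hqu
    rcases h.1.1.2.2 q hqs hqX with rfl | rfl
    · exact absurd rfl hqu
    · exact ⟨W, [], .single W h, by simp⟩
  | @comp u' v' w' W₁ W₂ h₁ h₂ ih =>
    intro q hqX hqs hqu
    by_cases hqv : q = v'
    · subst hqv
      exact ⟨W₁, W₂.support.tail, .single W₁ h₁, Walk.support_append W₁ W₂⟩
    · rw [Walk.mem_support_append_iff] at hqs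
      rcases hqs with hq₁ | hq₂
      · rcases h₁.1.1.2.2 q hq₁ hqX with rfl | rfl
        · exact absurd rfl hqu
        · exact absurd rfl hqv
      · obtain ⟨P₂, s, hc, hsup⟩ := ih q hqX hq₂ hqv
        refine ⟨W₁.append P₂, s, .comp W₁ P₂ h₁ hc, ?_⟩
        rw [Walk.support_append, Walk.support_append, hsup,
          List.tail_append_of_ne_nil (Walk.support_ne_nil _), List.append_assoc]

private lemma seg3 {X : Set V} :
    ∀ {b v : V} (D : G.Walk b v), (∃ q ∈ D.support, q ∈ X) →
      ∃ (q : V) (S : G.Walk b q) (R : G.Walk q v), q ∈ X ∧ D = S.append R ∧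
        ∀ w ∈ S.support.dropLast, w ∉ X := by
  intro b v D
  induction D with
  | nil =>
    rintro ⟨q, hq, hqX⟩
    rw [Walk.support_nil, List.mem_singleton] at hq
    subst hq
    exact ⟨q, .nil, .nil, hqX, rfl, by simp⟩
  | @cons b c v h D ih =>
    intro hex
    by_cases hbX : b ∈ X
    · exact ⟨b, .nil, .cons h D, hbX, rfl, by simp⟩
    · obtain ⟨q, hq, hqX⟩ := hex
      rw [Walk.support_cons, List.mem_cons] at hq
      rcases hq with rfl | hq
      · exact absurd hqX hbX
      · obtain ⟨q', S, R, hq'X, hDSR, hdrop⟩ := ih ⟨q, hq, hqX⟩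
        refine ⟨q', .cons h S, R, hq'X, by rw [Walk.cons_append, ← hDSR], ?_⟩
        intro w hw
        rw [Walk.support_cons, List.dropLast_cons_of_ne_nil (Walk.support_ne_nil S),
          List.mem_cons] at hw
        rcases hw with rfl | hw
        · exact hbX
        · exact hdrop w hw

private lemma seg4 {X : Set V} :
    ∀ {u v : V} (D : G.Walk u v) (m : List V) (yy : V) (m₂ : List V),
      D.support = m ++ yy :: m₂ → (∃ p ∈ m, p ∈ X) →
      ∃ (p : V) (S₁ : G.Walk u p) (S₂ : G.Walk p v) (m' : List V),
        p ∈ X ∧ D = S₁.append S₂ ∧ S₂.support = p :: (m' ++ yy :: m₂) ∧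
          ∀ w ∈ m', w ∉ X := by
  intro u v D
  induction D with
  | nil =>
    intro m yy m₂ hs hex
    rw [Walk.support_nil] at hs
    cases m with
    | nil => obtain ⟨p, hp, -⟩ := hex; simp at hp
    | cons c m'' => simp at hs
  | @cons u c v h D ih =>
    intro m yy m₂ hs hex
    rw [Walk.support_cons] at hs
    cases m with
    | nil => obtain ⟨p, hp, -⟩ := hex; simp at hp
    | cons c' m'' =>
      rw [List.cons_append] at hs
      obtain ⟨rfl, hs'⟩ := List.cons_eq_cons.mp hs
      by_cases hex' : ∃ p ∈ m'', p ∈ X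
      · obtain ⟨p, S₁, S₂, m', hpX, hD, hsup, hm'⟩ := ih m'' yy m₂ hs' hex'
        exact ⟨p, .cons h S₁, S₂, m', hpX, by rw [Walk.cons_append, ← hD], hsup, hm'⟩
      · obtain ⟨p, hp, hpX⟩ := hex
        rw [List.mem_cons] at hp
        rcases hp with rfl | hp
        · refine ⟨p, .nil, .cons h D, m'', hpX, rfl, ?_, ?_⟩
          · rw [Walk.support_cons, hs']
          · exact fun w hw hwX => hex' ⟨w, hw, hwX⟩
        · exact absurd ⟨p, hp, hpX⟩ hex'

private lemma seg5 {X : Set V} :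
    ∀ {c v : V} (D : G.Walk c v) (m' : List V) (yy : V) (m₂ : List V),
      D.support = m' ++ yy :: m₂ → (∀ w ∈ m', w ∉ X) → yy ∉ X → (∃ q ∈ m₂, q ∈ X) →
      ∃ (q : V) (S : G.Walk c q) (R : G.Walk q v), q ∈ X ∧ D = S.append R ∧
        yy ∈ S.support ∧ ∀ w ∈ S.support.dropLast, w ∉ X := by
  intro c v D
  induction D with
  | nil =>
    intro m' yy m₂ hs hm' hyy hex
    rw [Walk.support_nil] at hs
    cases m' with
    | nil =>
      obtain ⟨rfl, hm₂⟩ := List.cons_eq_cons.mp hs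
      obtain ⟨q, hq, -⟩ := hex
      rw [← hm₂] at hq
      simp at hq
    | cons a t => simp at hs
  | @cons c b v h D ih =>
    intro m' yy m₂ hs hm' hyy hex
    rw [Walk.support_cons] at hs
    cases m' with
    | nil =>
      obtain ⟨rfl, hs'⟩ := List.cons_eq_cons.mp hs
      obtain ⟨q, S₃, R, hqX, hD, hdrop⟩ := seg3 D (by rw [hs']; exact hex)
      refine ⟨q, .cons h S₃, R, hqX, by rw [Walk.cons_append, ← hD],
        Walk.start_mem_support _, ?_⟩
      intro w hw
      rw [Walk.support_cons, List.dropLast_cons_of_ne_nil (Walk.support_ne_nil S₃),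
        List.mem_cons] at hw
      rcases hw with rfl | hw
      · exact hyy
      · exact hdrop w hw
    | cons a t =>
      obtain ⟨rfl, hs'⟩ := List.cons_eq_cons.mp hs
      obtain ⟨q, S, R, hqX, hD, hyyS, hdrop⟩ :=
        ih t yy m₂ hs' (fun w hw => hm' w (List.mem_cons_of_mem _ hw)) hyy hex
      refine ⟨q, .cons h S, R, hqX, by rw [Walk.cons_append, ← hD],
        by rw [Walk.support_cons]; exact List.mem_cons_of_mem _ hyyS, ?_⟩
      intro w hw
      rw [Walk.support_cons, List.dropLast_cons_of_ne_nil (Walk.support_ne_nil S),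
        List.mem_cons] at hw
      rcases hw with rfl | hw
      · exact hm' w List.mem_cons_self
      · exact hdrop w hw

private lemma extract_core {X Y : Set V} {a b : V} (hab : G.Adj a b) (D : G.Walk b a)
    (hD : D.IsPath) (hC : (Walk.cons hab D).IsCycle) (hlen : (Walk.cons hab D).length ≤ r)
    (m : List V) (yy : V) (m₂ : List V) (hsup : D.support = m ++ yy :: m₂)
    (hyyY : yy ∈ Y) (hyyX : yy ∉ X) (hm : ∃ p ∈ m, p ∈ X) (hm₂ : ∃ q ∈ m₂, q ∈ X) :
    ∃ (p q : V) (S : G.Walk p q), p ∈ X ∧ q ∈ X ∧ p ≠ q ∧ IsLocalXPath G r X S ∧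
      ∃ y ∈ Y, y ∈ S.support := by
  obtain ⟨p, S₁, S₂, m', hpX, hD₁, hS₂sup, hm'X⟩ := seg4 D m yy m₂ hsup hm
  cases S₂ with
  | nil => rw [Walk.support_nil] at hS₂sup; simp at hS₂sup
  | @cons p b₀ a h₀ S₂' =>
    rw [Walk.support_cons] at hS₂sup
    obtain ⟨-, hS₂'sup⟩ := List.cons_eq_cons.mp hS₂sup
    obtain ⟨q, S', R, hqX, hS₂'D, hyyS, hdropX⟩ := seg5 S₂' m' yy m₂ hS₂'sup hm'X hyyX hm₂
    rw [hS₂'D] at hD₁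
    have hnd : D.support.Nodup := hD.support_nodup
    have hsupfull : D.support = S₁.support ++ (S'.support ++ R.support.tail) := by
      rw [hD₁, Walk.support_append, Walk.support_cons, List.tail_cons, Walk.support_append]
    rw [hsupfull] at hnd
    obtain ⟨hnd₁, hnd₂, hdisj12⟩ := List.nodup_append'.mp hnd
    have hpS₁ : p ∈ S₁.support := Walk.end_mem_support S₁
    have hpnotS' : p ∉ S'.support := fun hp => hdisj12 hpS₁ (List.mem_append_left _ hp)
    have hndS' : S'.support.Nodup := (List.nodup_append'.mp hnd₂).1
    have hqS' : q ∈ S'.support := Walk.end_mem_support S'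
    have hpq : p ≠ q := fun h => hpnotS' (h ▸ hqS')
    have hS'ne : S'.support ≠ [] := Walk.support_ne_nil S'
    have hS'last : S'.support.getLast hS'ne = q := by
      have h1 := walk_support_getLast? S'
      rw [List.getLast?_eq_getLast_of_ne_nil hS'ne] at h1
      exact Option.some_inj.mp h1
    have hXcond : ∀ w ∈ S'.support, w ∈ X → w = q := by
      intro w hw hwX
      rw [← List.dropLast_append_getLast hS'ne, List.mem_append] at hw
      rcases hw with hw' | hw'
      · exact absurd hwX (hdropX w hw')
      · rw [List.mem_singleton] at hw'; rw [hw', hS'last]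
    refine ⟨p, q, Walk.cons h₀ S', hpX, hqX, hpq,
      ⟨⟨⟨hpX, hqX, ?_⟩, Or.inl ⟨a, Walk.cons hab D, hC, hlen, ?_⟩⟩, ?_⟩,
      yy, hyyY, by rw [Walk.support_cons]; exact List.mem_cons_of_mem _ hyyS⟩
    · intro w hw hwX
      rw [Walk.support_cons, List.mem_cons] at hw
      rcases hw with rfl | hw
      · exact Or.inl rfl
      · exact Or.inr (hXcond w hw hwX)
    · intro e he
      rw [Walk.edges_cons]
      refine List.mem_cons_of_mem _ ?_
      rw [hD₁, Walk.edges_append, Walk.edges_cons, Walk.edges_append]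
      rw [Walk.edges_cons, List.mem_cons] at he
      rcases he with rfl | he
      · exact List.mem_append_right _ List.mem_cons_self
      · exact List.mem_append_right _ (List.mem_cons_of_mem _ (List.mem_append_left _ he))
    · rw [Walk.isPath_def, Walk.support_cons]
      exact List.nodup_cons.mpr ⟨hpnotS', hndS'⟩

private lemma getLast?_cons_of_ne_nil {l : List V} (a : V) (h : l ≠ []) :
    (a :: l).getLast? = l.getLast? := by
  rw [show a :: l = [a] ++ l from rfl, List.getLast?_append_of_ne_nil [a] h]

private lemma getLast?_big (l₂ l₃ l₄ l₅ : List V) (y x' y' : V) :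
    (l₂ ++ (y :: (l₃ ++ (x' :: (l₄ ++ (y' :: l₅)))))).getLast? = (y' :: l₅).getLast? := by
  rw [List.getLast?_append_of_ne_nil _ (by simp), getLast?_cons_of_ne_nil _ (by simp),
    List.getLast?_append_of_ne_nil _ (by simp), getLast?_cons_of_ne_nil _ (by simp),
    List.getLast?_append_of_ne_nil _ (by simp)]

private lemma extract_segment {X Y : Set V} (hdisj : Disjoint X Y)
    (halt : Alternates G r X Y ∨ Alternates G r Y X) :
    ∃ (p q : V) (S : G.Walk p q), p ∈ X ∧ q ∈ X ∧ p ≠ q ∧ IsLocalXPath G r X S ∧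
      ∃ y ∈ Y, y ∈ S.support := by
  have hXY : ∀ v ∈ Y, v ∉ X := fun v hvY hvX => Set.disjoint_left.mp hdisj hvX hvY
  rcases halt with ⟨a, C, hC, hlen, x, y, x', y', l₁, l₂, l₃, l₄, l₅, hxX, hx'X, hyY, hy'Y,
      hxx', hyy', hsup⟩ |
    ⟨a, C, hC, hlen, yv, xv, yv', xv', m₁, n₂, n₃, n₄, n₅, hyvY, hyv'Y, hxvX, hxv'X,
      hyvv', hxvv', hsup⟩
  · cases C with
    | nil => exact absurd hC (Walk.IsCycle.not_of_nil)
    | @cons a b a' hab D =>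
      have hDpath : D.IsPath := Walk.IsPath.mk' (by
        have h1 := hC.support_nodup
        rwa [Walk.support_cons, List.tail_cons] at h1)
      rw [Walk.support_cons] at hsup
      simp only [List.append_assoc, List.cons_append] at hsup
      cases l₁ with
      | cons c l₁' =>
        simp only [List.cons_append] at hsup
        obtain ⟨rfl, hs'⟩ := List.cons_eq_cons.mp hsup
        refine extract_core hab D hDpath hC hlen (l₁' ++ x :: l₂) y
          (l₃ ++ x' :: (l₄ ++ y' :: l₅)) (by rw [hs']; simp) hyY (hXY y hyY)
          ⟨x, by simp, hxX⟩ ⟨x', by simp, hx'X⟩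
      | nil =>
        simp only [List.nil_append] at hsup
        obtain ⟨rfl, hs'⟩ := List.cons_eq_cons.mp hsup
        have hlast := walk_support_getLast? D
        rw [hs'] at hlast
        rw [getLast?_big] at hlast
        cases l₅ with
        | nil =>
          have : y' = a := by simpa using hlast
          exact absurd hxX (this ▸ hXY y' hy'Y)
        | cons e₅ t₅ =>
          rw [List.getLast?_cons_cons] at hlast
          have haI : a ∈ e₅ :: t₅ := mem_of_getLast? hlast
          refine extract_core hab D hDpath hC hlen (l₂ ++ y :: (l₃ ++ x' :: l₄)) y'
            (e₅ :: t₅) (by rw [hs']; simp) hy'Y (hXY y' hy'Y)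
            ⟨x', by simp, hx'X⟩ ⟨a, haI, hxX⟩
  · cases C with
    | nil => exact absurd hC (Walk.IsCycle.not_of_nil)
    | @cons a b a' hab D =>
      have hDpath : D.IsPath := Walk.IsPath.mk' (by
        have h1 := hC.support_nodup
        rwa [Walk.support_cons, List.tail_cons] at h1)
      rw [Walk.support_cons] at hsup
      simp only [List.append_assoc, List.cons_append] at hsup
      cases m₁ with
      | cons c m₁' =>
        simp only [List.cons_append] at hsup
        obtain ⟨rfl, hs'⟩ := List.cons_eq_cons.mp hsup
        refine extract_core hab D hDpath hC hlen (m₁' ++ yv :: (n₂ ++ xv :: n₃)) yv'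
          (n₄ ++ xv' :: n₅) (by rw [hs']; simp) hyv'Y (hXY yv' hyv'Y)
          ⟨xv, by simp, hxvX⟩ ⟨xv', by simp, hxv'X⟩
      | nil =>
        simp only [List.nil_append] at hsup
        obtain ⟨rfl, hs'⟩ := List.cons_eq_cons.mp hsup
        refine extract_core hab D hDpath hC hlen (n₂ ++ xv :: n₃) yv'
          (n₄ ++ xv' :: n₅) (by rw [hs']; simp) hyv'Y (hXY yv' hyv'Y)
          ⟨xv, by simp, hxvX⟩ ⟨xv', by simp, hxv'X⟩

private lemma IsLocalXPath.rev {X : Set V} {p q : V} {S : G.Walk p q}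
    (h : IsLocalXPath G r X S) : IsLocalXPath G r X S.reverse := by
  obtain ⟨⟨⟨hp, hq, hX⟩, hloc⟩, hpath⟩ := h
  refine ⟨⟨⟨hq, hp, ?_⟩, ?_⟩, hpath.reverse⟩
  · intro w hw hwX
    rw [Walk.support_reverse, List.mem_reverse] at hw
    exact (hX w hw hwX).symm
  · rcases hloc with ⟨a, C, hC, hlen, hsub⟩ | hlen1
    · exact Or.inl ⟨a, C, hC, hlen, fun e he =>
        hsub e (by rwa [Walk.edges_reverse, List.mem_reverse] at he)⟩
    · exact Or.inr (by rwa [Walk.length_reverse])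

private lemma nodup_no_dup {l : List V} (h : l.Nodup) {x : V} : ¬l.Duplicate x :=
  fun hd => hd.not_nodup h

private lemma no_dup_append {l₁ l₂ : List V} {x : V}
    (h₁ : ¬l₁.Duplicate x) (h₂ : ¬l₂.Duplicate x) (h₃ : ¬(x ∈ l₁ ∧ x ∈ l₂)) :
    ¬(l₁ ++ l₂).Duplicate x := by
  classical
  rw [List.duplicate_iff_two_le_count] at h₁ h₂ ⊢
  rw [List.count_append]
  rcases Nat.lt_or_ge (l₁.count x) 1 with hc₁ | hc₁
  · omega
  · have hx₁ : x ∈ l₁ := List.count_pos_iff.mp hc₁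
    have hx₂ : x ∉ l₂ := fun hx₂ => h₃ ⟨hx₁, hx₂⟩
    rw [List.count_eq_zero_of_not_mem hx₂]
    omega

private lemma no_dup_of_append_left {l₁ l₂ : List V} {x : V}
    (h : ¬(l₁ ++ l₂).Duplicate x) : ¬l₁.Duplicate x := by
  classical
  rw [List.duplicate_iff_two_le_count] at h ⊢
  rw [List.count_append] at h
  omega

private lemma reachY {X Y : Set V} (htom : Rtomic G r X)
    (hcoup : (X ∩ Y).Nonempty ∨ (Disjoint X Y ∧ (Alternates G r X Y ∨ Alternates G r Y X)))
    {x : V} (hxX : x ∈ X) (hxY : x ∉ Y) :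
    ∃ (z : V) (W : G.Walk x z), MemWr G r X W ∧ ∃ y ∈ Y, y ∈ W.support := by
  rcases hcoup with ⟨v, hvX, hvY⟩ | ⟨hdisj, halt⟩
  · have hxv : x ≠ v := fun h => hxY (h ▸ hvY)
    obtain ⟨W, hW⟩ := htom x hxX v hvX hxv
    exact ⟨v, W, hW, v, hvY, W.end_mem_support⟩
  · obtain ⟨p, q, S, hpX, hqX, hpq, hS, y, hyY, hyS⟩ := extract_segment hdisj halt
    have hSnd : S.support.Nodup := hS.2.support_nodup
    have hSXcond : ∀ w ∈ S.support, w ∈ X → w = p ∨ w = q := hS.1.1.2.2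
    by_cases hxp : x = p
    · subst hxp
      exact ⟨q, S, ⟨.single S hS, fun w _ => nodup_no_dup hSnd⟩, y, hyY, hyS⟩
    by_cases hxq : x = q
    · subst hxq
      refine ⟨p, S.reverse, ⟨.single S.reverse hS.rev,
        fun w _ => nodup_no_dup (by rw [Walk.support_reverse]; exact List.nodup_reverse.mpr hSnd)⟩,
        y, hyY, ?_⟩
      rw [Walk.support_reverse, List.mem_reverse]; exact hyS
    · obtain ⟨W, hWc, hWnd⟩ := htom x hxX p hpX hxp
      have hpS : p ∉ S.support.tail := by
        have := Walk.support_eq_cons S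
        rw [this] at hSnd
        exact (List.nodup_cons.mp hSnd).1
      by_cases hqW : q ∈ W.support
      · obtain ⟨P, s, hPc, hPsup⟩ := prefix_to hWc q hqX hqW (fun h => hxq h.symm)
        have hpP : p ∉ P.support := by
          intro hp
          cases s with
          | nil =>
            rw [List.append_nil] at hPsup
            have h1 := walk_support_getLast? W
            have h2 := walk_support_getLast? P
            rw [hPsup] at h1
            rw [h1] at h2
            exact hpq (Option.some_inj.mp h2)
          | cons s₀ st =>
            have hps : p ∈ s₀ :: st := by
              have h1 := walk_support_getLast? W
              rw [hPsup, List.getLast?_append_of_ne_nil _ (List.cons_ne_nil s₀ st)] at h1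
              exact mem_of_getLast? h1
            refine hWnd p hpX ?_
            rw [hPsup]
            classical
            rw [List.duplicate_iff_two_le_count, List.count_append]
            have c1 : 1 ≤ P.support.count p := List.count_pos_iff.mpr hp
            have c2 : 1 ≤ (s₀ :: st).count p := List.count_pos_iff.mpr hps
            omega
        refine ⟨p, P.append S.reverse, ⟨concat_append_right hPc S.reverse hS.rev, ?_⟩,
          y, hyY, ?_⟩
        · intro w hwX
          rw [Walk.support_append]
          refine no_dup_append ?_ ?_ ?_
          · exact no_dup_of_append_left (hPsup ▸ hWnd w hwX)
          · have hrev : S.reverse.support.Nodup := by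
              rw [Walk.support_reverse]; exact List.nodup_reverse.mpr hSnd
            exact nodup_no_dup ((List.nodup_cons.mp (Walk.support_eq_cons S.reverse ▸ hrev)).2)
          · rintro ⟨hw₁, hw₂⟩
            have hw₂' : w ∈ S.reverse.support := List.mem_of_mem_tail hw₂
            rw [Walk.support_reverse, List.mem_reverse] at hw₂'
            rcases hSXcond w hw₂' hwX with rfl | rfl
            · exact hpP hw₁
            · have : w ∉ S.reverse.support.tail := by
                have h1 := Walk.support_eq_cons S.reverse
                have h2 : S.reverse.support.Nodup := by
                  rw [Walk.support_reverse]; exact List.nodup_reverse.mpr hSnd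
                rw [h1] at h2
                exact (List.nodup_cons.mp h2).1
              exact this hw₂
        · rw [Walk.mem_support_append_iff]
          right
          rw [Walk.support_reverse, List.mem_reverse]
          exact hyS
      · refine ⟨q, W.append S, ⟨concat_append_right hWc S hS, ?_⟩, y, hyY, ?_⟩
        · intro w hwX
          rw [Walk.support_append]
          refine no_dup_append (hWnd w hwX)
            (nodup_no_dup ((List.nodup_cons.mp (Walk.support_eq_cons S ▸ hSnd)).2)) ?_
          rintro ⟨hw₁, hw₂⟩
          have hw₂' : w ∈ S.support := List.mem_of_mem_tail hw₂
          rcases hSXcond w hw₂' hwX with rfl | rfl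
          · exact hpS hw₂
          · exact hqW hw₁
        · rw [Walk.mem_support_append_iff]
          exact Or.inr hyS

private lemma link_eq {C D X Y : Set V} (h₂ : IsSep G C D) (hY : Y = C ∩ D)
    (htom : Rtomic G r X)
    (hcoup : (X ∩ Y).Nonempty ∨ (Disjoint X Y ∧ (Alternates G r X Y ∨ Alternates G r Y X))) :
    X \ D = LocalLink G r X Y (edgesBetween G (C \ Y) Y) := by
  subst hY
  ext x
  constructor
  · rintro ⟨hxX, hxD⟩
    have hxC : x ∈ C := by
      have := h₂.1 ▸ Set.mem_univ x
      exact (Set.mem_union x C D).mp this |>.resolve_right hxD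
    have hxY : x ∉ C ∩ D := fun h => hxD h.2
    obtain ⟨z, W, hW, y, hyY, hyS⟩ := reachY htom hcoup hxX hxY
    obtain ⟨e0, he0, he0b⟩ := exists_bdry_edge W hxY ⟨y, hyY, hyS⟩
    obtain ⟨l₁, e, l₂, hdec, heb, hl₁⟩ :=
      exists_first_decomp (· ∈ edgeBdry G (C ∩ D)) W.edges ⟨e0, he0, he0b⟩
    obtain ⟨u, w, hadj, hew, huY, hiff⟩ := first_bdry_side h₂ W l₁ e l₂ hdec hl₁ hxY
    have hwY : w ∈ C ∩ D := edgeBdry_other (hew ▸ heb) huY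
    have huC : u ∈ C := hiff.mpr hxC
    exact ⟨⟨hxX, hxY⟩, z, W, hW, ⟨y, hyY, hyS⟩, e, l₁, l₂, hdec, heb,
      ⟨u, w, hadj, hew, ⟨huC, huY⟩, hwY⟩, hl₁⟩
  · rintro ⟨⟨hxX, hxY⟩, z, W, hW, hvis, e, l₁, l₂, hdec, heb, heF, hl₁⟩
    obtain ⟨u, w, hadj, hew, huY, hiff⟩ := first_bdry_side h₂ W l₁ e l₂ hdec hl₁ hxY
    have hwY : w ∈ C ∩ D := edgeBdry_other (hew ▸ heb) huY
    obtain ⟨c', d', hadj', he', hc', hd'⟩ := heF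
    rw [hew] at he'
    rw [Sym2.eq_iff] at he'
    have huC : u ∈ C := by
      rcases he' with ⟨rfl, rfl⟩ | ⟨rfl, rfl⟩
      · exact hc'.1
      · exact absurd hd' huY
    have hxC : x ∈ C := hiff.mp huC
    exact ⟨hxX, fun hxD => hxY ⟨hxC, hxD⟩⟩

end Statement15Aux

/-- Correspondence of links: for separations `{A₁,A₂}` and
`{C₁,C₂}` with `r`-coupled `r`-tomic separators `X`, `Y` inducing the
`r`-local separations `{E₁,X,E₂}` and `{F₁,Y,F₂}`: the `X`-link for `C_i`
equals the `X`-link for `F_i`, the `Y`-link for `A_i` equals the `Y`-link for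
`E_i`, and `E_G(X∩Y, (A_i∖A_{3−i})∩(C_j∖C_{3−j})) = E_i ∩ F_j ∩ ∂(X∩Y)`. -/
theorem statement15 {V : Type*} (G : SimpleGraph V) (r : ℕ) (hG : G.Connected)
    (hgen : CycleSpaceGenShort G r)
    (A₁ A₂ C₁ C₂ : Set V)
    (h₁ : IsSep G A₁ A₂) (h₂ : IsSep G C₁ C₂)
    (X Y : Set V) (E₁ E₂ F₁ F₂ : Set (Sym2 V))
    (hX : X = A₁ ∩ A₂) (hY : Y = C₁ ∩ C₂)
    (ht₁ : Rtomic G r X) (ht₂ : Rtomic G r Y)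
    (hcoup : RCoupled G r X Y)
    (hE₁ : E₁ = edgesBetween G (A₁ \ X) X) (hE₂ : E₂ = edgesBetween G (A₂ \ X) X)
    (hF₁ : F₁ = edgesBetween G (C₁ \ Y) Y) (hF₂ : F₂ = edgesBetween G (C₂ \ Y) Y) :
    (X \ C₂ = LocalLink G r X Y F₁) ∧ (X \ C₁ = LocalLink G r X Y F₂) ∧
    (Y \ A₂ = LocalLink G r Y X E₁) ∧ (Y \ A₁ = LocalLink G r Y X E₂) ∧
    (edgesBetween G (X ∩ Y) ((A₁ \ A₂) ∩ (C₁ \ C₂)) = E₁ ∩ F₁ ∩ edgeBdry G (X ∩ Y)) ∧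
    (edgesBetween G (X ∩ Y) ((A₁ \ A₂) ∩ (C₂ \ C₁)) = E₁ ∩ F₂ ∩ edgeBdry G (X ∩ Y)) ∧
    (edgesBetween G (X ∩ Y) ((A₂ \ A₁) ∩ (C₁ \ C₂)) = E₂ ∩ F₁ ∩ edgeBdry G (X ∩ Y)) ∧
    (edgesBetween G (X ∩ Y) ((A₂ \ A₁) ∩ (C₂ \ C₁)) = E₂ ∩ F₂ ∩ edgeBdry G (X ∩ Y)) := by
  have hc1 : (X ∩ Y).Nonempty ∨
      (Disjoint X Y ∧ (Alternates G r X Y ∨ Alternates G r Y X)) :=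
    hcoup.imp id (fun h => ⟨h.1, Or.inl h.2⟩)
  have hc2 : (Y ∩ X).Nonempty ∨
      (Disjoint Y X ∧ (Alternates G r Y X ∨ Alternates G r X Y)) := by
    rcases hc1 with h | ⟨h1, h2⟩
    · exact Or.inl (by rwa [Set.inter_comm])
    · exact Or.inr ⟨h1.symm, h2.symm⟩
  have hY' : Y = C₂ ∩ C₁ := by rw [hY, Set.inter_comm]
  have hX' : X = A₂ ∩ A₁ := by rw [hX, Set.inter_comm]
  refine ⟨?_, ?_, ?_, ?_, ?_, ?_, ?_, ?_⟩
  · rw [hF₁]; exact link_eq h₂ hY ht₁ hc1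
  · rw [hF₂]; exact link_eq h₂.symm' hY' ht₁ hc1
  · rw [hE₁]; exact link_eq h₁ hX ht₂ hc2
  · rw [hE₂]; exact link_eq h₁.symm' hX' ht₂ hc2
  · have := edges_eq G A₁ A₂ C₁ C₂
    rw [← hX, ← hY] at this
    rw [hX, hY, hE₁, hF₁] at *
    rw [← hX, ← hY] at *
    exact this
  · have := edges_eq G A₁ A₂ C₂ C₁
    rw [Set.inter_comm C₂ C₁] at this
    rw [← hX, ← hY] at this
    rw [hE₁, hF₂, hX, hY]
    rw [← hX, ← hY]
    exact this
  · have := edges_eq G A₂ A₁ C₁ C₂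
    rw [Set.inter_comm A₂ A₁] at this
    rw [← hX, ← hY] at this
    rw [hE₂, hF₁, hX, hY]
    rw [← hX, ← hY]
    exact this
  · have := edges_eq G A₂ A₁ C₂ C₁
    rw [Set.inter_comm A₂ A₁, Set.inter_comm C₂ C₁] at this
    rw [← hX, ← hY] at this
    rw [hE₂, hF₂, hX, hY]
    rw [← hX, ← hY]
    exact this

end LS
end

section
/- Let G be a graph, let r ≥ 2 be an integer, let X ⊆ V(G), and let W ∈ W_r(X) be a walk that uses exactly ℓ vertices of X. Then the endvertices of W have distance at most (ℓ−1)·r/2 in G. -/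
namespace LS

open SimpleGraph

variable {V : Type*}

private lemma two_mul_dist_le_of_closedWalk {V : Type*} {G : SimpleGraph V} {a u v : V}
    (C : G.Walk a a) (hu : u ∈ C.support) (hv : v ∈ C.support) :
    2 * G.dist u v ≤ C.length := by
  classical
  set D : G.Walk u u := (C.dropUntil u hu).append (C.takeUntil u hu) with hD
  have hlenD : D.length = C.length := by
    rw [hD, SimpleGraph.Walk.length_append]
    have := congrArg SimpleGraph.Walk.length (C.take_spec hu)
    rw [SimpleGraph.Walk.length_append] at this
    omega
  have hvD : v ∈ D.support := by
    rw [hD, SimpleGraph.Walk.mem_support_append_iff]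
    rcases (SimpleGraph.Walk.mem_support_append_iff _ _).1
        (by rw [C.take_spec hu]; exact hv) with h | h
    · exact Or.inr h
    · exact Or.inl h
  have h1 : G.dist u v ≤ (D.takeUntil v hvD).length := SimpleGraph.dist_le _
  have h2 : G.dist v u ≤ (D.dropUntil v hvD).length := SimpleGraph.dist_le _
  have hsum : (D.takeUntil v hvD).length + (D.dropUntil v hvD).length = D.length := by
    have := congrArg SimpleGraph.Walk.length (D.take_spec hvD)
    rw [SimpleGraph.Walk.length_append] at this
    omega
  have hcomm : G.dist u v = G.dist v u := SimpleGraph.dist_comm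
  omega

private lemma ends_mem_of_edges_subset {V : Type*} {G : SimpleGraph V} {a : V}
    {C : G.Walk a a} :
    ∀ {u v : V} (W : G.Walk u v), W.length ≠ 0 → (∀ e ∈ W.edges, e ∈ C.edges) →
      u ∈ C.support ∧ v ∈ C.support := by
  intro u v W
  induction W with
  | nil => simp
  | @cons u b v h p ih =>
    intro _ hE
    have he : s(u, b) ∈ C.edges := hE _ (by simp)
    refine ⟨C.fst_mem_support_of_mem_edges he, ?_⟩
    cases p with
    | nil => exact C.snd_mem_support_of_mem_edges he
    | cons h' p' =>
      refine (ih (by simp) (fun e he' => hE e ?_)).2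
      simp only [SimpleGraph.Walk.edges_cons, List.mem_cons] at he' ⊢
      tauto

private lemma localXPath_bound {V : Type*} {G : SimpleGraph V} {r : ℕ} (hr : 2 ≤ r)
    {X : Set V} {u v : V} {W : G.Walk u v} (h : IsLocalXPath G r X W) (huv : u ≠ v) :
    2 * G.dist u v ≤ r := by
  have hlen : W.length ≠ 0 := fun h0 => huv (SimpleGraph.Walk.eq_of_length_eq_zero h0)
  rcases h.1.2 with ⟨a, C, _, hCr, hsub⟩ | h1
  · obtain ⟨hu, hv⟩ := ends_mem_of_edges_subset W hlen hsub
    calc 2 * G.dist u v ≤ C.length := two_mul_dist_le_of_closedWalk C hu hv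
      _ ≤ r := hCr
  · have : G.dist u v ≤ 1 := h1 ▸ SimpleGraph.dist_le W
    omega

private lemma concat_bound {V : Type*} {G : SimpleGraph V} {r : ℕ} (hr : 2 ≤ r)
    {X : Set V} {u v : V} {W : G.Walk u v} (h : ConcatLocalPaths G r X W) :
    (∀ x ∈ X, ¬W.support.Duplicate x) →
    2 * G.dist u v ≤ ({x ∈ X | x ∈ W.support}.ncard - 1) * r := by
  classical
  induction h with
  | @single u v W h =>
    intro _
    by_cases huv : u = v
    · subst huv
      simp [SimpleGraph.dist_self]
    · have hS : {x ∈ X | x ∈ W.support} = {u, v} := by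
        apply Set.eq_of_subset_of_subset
        · rintro x ⟨hxX, hxs⟩
          rcases h.1.1.2.2 x hxs hxX with rfl | rfl
          · exact Or.inl rfl
          · exact Or.inr rfl
        · rintro x (rfl | rfl)
          · exact ⟨h.1.1.1, W.start_mem_support⟩
          · exact ⟨h.1.1.2.1, W.end_mem_support⟩
      rw [hS, Set.ncard_pair huv]
      simpa using localXPath_bound hr h huv
  | @comp u v w W₁ W₂ h₁ h₂ ih =>
    intro hdup
    have hsupp : (W₁.append W₂).support = W₁.support ++ W₂.support.tail :=
      SimpleGraph.Walk.support_append W₁ W₂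
    have hvX : v ∈ X := h₁.1.1.2.1
    have hv₁ : v ∈ W₁.support := W₁.end_mem_support
    -- no duplicates in W₂
    have hdup₂ : ∀ x ∈ X, ¬W₂.support.Duplicate x := by
      intro x hxX hxd
      apply hdup x hxX
      rw [List.duplicate_iff_two_le_count] at hxd ⊢
      rw [hsupp, List.count_append]
      rw [W₂.support_eq_cons] at hxd
      by_cases hxv : x = v
      · subst hxv
        have h1 : 0 < List.count x W₁.support := List.count_pos_iff.2 hv₁
        rw [List.count_cons_self] at hxd
        omega
      · rw [List.count_cons_of_ne (Ne.symm hxv)] at hxd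
        omega
    set S₂ : Set V := {x ∈ X | x ∈ W₂.support} with hS₂def
    have hS₂fin : S₂.Finite :=
      Set.Finite.subset (W₂.support.finite_toSet) (fun x hx => hx.2)
    have hvS₂ : v ∈ S₂ := ⟨hvX, W₂.start_mem_support⟩
    have hpos : 0 < S₂.ncard := (Set.ncard_pos hS₂fin).2 ⟨v, hvS₂⟩
    by_cases huv : u = v
    · subst huv
      have hSeq : {x ∈ X | x ∈ (W₁.append W₂).support} = S₂ := by
        ext x
        simp only [Set.mem_setOf_eq, hS₂def, SimpleGraph.Walk.mem_support_append_iff]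
        constructor
        · rintro ⟨hxX, hx | hx⟩
          · rcases h₁.1.1.2.2 x hx hxX with rfl | rfl <;>
              exact ⟨hxX, W₂.start_mem_support⟩
          · exact ⟨hxX, hx⟩
        · rintro ⟨hxX, hx⟩; exact ⟨hxX, Or.inr hx⟩
      rw [hSeq]
      exact ih hdup₂
    · -- u not in W₂.support
      have huW₂ : u ∉ W₂.support := by
        intro huW
        apply hdup u h₁.1.1.1
        rw [List.duplicate_iff_two_le_count, hsupp, List.count_append]
        have h1 : 0 < List.count u W₁.support := List.count_pos_iff.2 W₁.start_mem_support
        have h2 : 0 < List.count u W₂.support.tail := by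
          apply List.count_pos_iff.2
          rw [W₂.support_eq_cons, List.mem_cons] at huW
          rcases huW with rfl | hh
          · exact absurd rfl huv
          · exact hh
        omega
      have hSeq : {x ∈ X | x ∈ (W₁.append W₂).support} = insert u S₂ := by
        ext x
        simp only [Set.mem_setOf_eq, hS₂def, Set.mem_insert_iff,
          SimpleGraph.Walk.mem_support_append_iff]
        constructor
        · rintro ⟨hxX, hx | hx⟩
          · rcases h₁.1.1.2.2 x hx hxX with rfl | rfl
            · exact Or.inl rfl
            · exact Or.inr hvS₂
          · exact Or.inr ⟨hxX, hx⟩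
        · rintro (rfl | ⟨hxX, hx⟩)
          · exact ⟨h₁.1.1.1, Or.inl W₁.start_mem_support⟩
          · exact ⟨hxX, Or.inr hx⟩
      have huS₂ : u ∉ S₂ := fun hmem => huW₂ hmem.2
      rw [hSeq, Set.ncard_insert_of_notMem huS₂ hS₂fin]
      -- triangle inequality via explicit walks
      obtain ⟨p, hp⟩ := SimpleGraph.Reachable.exists_walk_length_eq_dist ⟨W₁⟩
      obtain ⟨q, hq⟩ := SimpleGraph.Reachable.exists_walk_length_eq_dist ⟨W₂⟩
      have htri : G.dist u w ≤ G.dist u v + G.dist v w := by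
        calc G.dist u w ≤ (p.append q).length := SimpleGraph.dist_le _
          _ = G.dist u v + G.dist v w := by
              rw [SimpleGraph.Walk.length_append, hp, hq]
      have hb1 : 2 * G.dist u v ≤ r := localXPath_bound hr h₁ huv
      have hb2 : 2 * G.dist v w ≤ (S₂.ncard - 1) * r := ih hdup₂
      have hkey : (S₂.ncard + 1 - 1) * r = (S₂.ncard - 1) * r + r := by
        have h2 : S₂.ncard - 1 + 1 = S₂.ncard := Nat.succ_pred_eq_of_pos hpos
        calc (S₂.ncard + 1 - 1) * r = S₂.ncard * r := by rw [Nat.add_sub_cancel]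
          _ = (S₂.ncard - 1 + 1) * r := by rw [h2]
          _ = (S₂.ncard - 1) * r + r := by ring
      omega

/-- If `r ≥ 2` and `W ∈ W_r(X)` uses exactly `ℓ` vertices of
`X`, then the endvertices of `W` have distance at most `(ℓ−1)·r/2` in `G`. -/
theorem statement17 {V : Type*} (G : SimpleGraph V) (r : ℕ) (hr : 2 ≤ r)
    (X : Set V) (u v : V) (W : G.Walk u v) (hW : MemWr G r X W)
    (ℓ : ℕ) (hℓ : {x ∈ X | x ∈ W.support}.ncard = ℓ) :
    2 * G.dist u v ≤ (ℓ - 1) * r := by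
  rw [← hℓ]
  exact concat_bound hr hW.1 hW.2

end LS
end
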